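/- arXiv:1203.5219 — 2 statements merged into one kernel-verified Lean document; each statement's English description precedes it below -/
import Mathlib

section
/- Let f : ℤ → ℂ and define S(N;h) = ∑_{N < n ≤ N+h} f(n). Let t ≥ 0 and H = 2^t. Then for every integer n and every positive integer h ≤ H and every real r ≥ 1, |S(n;h)|^{2r} ≤ (t+1)^{2r-1} · ∑_{0 ≤ d ≤ t} ∑_{0 ≤ v < 2^d} |S(n + v·2^{t-d}; 2^{t-d})|^{2r}. -/
open Finset

lemma rpow_sum_le_card_mul {ι : Type*} (s : Finset ι) (z : ι → ℝ) (hz : ∀ i ∈ s, 0 ≤ z i)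
    {p : ℝ} (hp : 1 ≤ p) :
    (∑ i ∈ s, z i) ^ p ≤ (s.card : ℝ) ^ (p - 1) * ∑ i ∈ s, z i ^ p := by
  rcases s.eq_empty_or_nonempty with rfl | hs
  · simp [Real.zero_rpow (by linarith : p ≠ 0)]
  have hk : (0 : ℝ) < s.card := by exact_mod_cast hs.card_pos
  have key := Real.rpow_arith_mean_le_arith_mean_rpow s (fun _ => (s.card : ℝ)⁻¹) z
    (fun i _ => by positivity) (by simp [Finset.sum_const]; field_simp) hz hp
  rw [← Finset.mul_sum, ← Finset.mul_sum, Real.mul_rpow (by positivity)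
    (Finset.sum_nonneg hz)] at key
  have h1 : ((s.card : ℝ)⁻¹) ^ p > 0 := by positivity
  calc (∑ i ∈ s, z i) ^ p
      = ((s.card : ℝ)⁻¹ ^ p)⁻¹ * (((s.card : ℝ)⁻¹) ^ p * (∑ i ∈ s, z i) ^ p) := by
        field_simp
    _ ≤ ((s.card : ℝ)⁻¹ ^ p)⁻¹ * ((s.card : ℝ)⁻¹ * ∑ i ∈ s, z i ^ p) := by
        apply mul_le_mul_of_nonneg_left key (by positivity)
    _ = (s.card : ℝ) ^ (p - 1) * ∑ i ∈ s, z i ^ p := by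
        rw [Real.inv_rpow hk.le, inv_inv, ← mul_assoc, ← Real.rpow_neg_one (s.card : ℝ),
          ← Real.rpow_add hk, sub_eq_add_neg]


lemma dyadic_decomp (t : ℕ) : ∀ h : ℕ, h ≤ 2 ^ t → ∃ D : Finset ℕ, ∃ g : ℕ → ℕ,
    D ⊆ Finset.range (t + 1) ∧ (∀ d ∈ D, g d < 2 ^ d) ∧ (∀ d ∈ D, 2 ^ (t - d) ≤ h) ∧
    ∀ (f : ℤ → ℂ) (n : ℤ), ∑ m ∈ Finset.Ioc n (n + (h : ℤ)), f m
      = ∑ d ∈ D, ∑ m ∈ Finset.Ioc (n + (g d * 2 ^ (t - d) : ℕ))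
          (n + (g d * 2 ^ (t - d) : ℕ) + (2 ^ (t - d) : ℕ)), f m := by
  induction t with
  | zero =>
    intro h hle
    interval_cases h
    · exact ⟨∅, id, by simp, by simp, by simp, by simp⟩
    · refine ⟨{0}, id, by simp, by simp, by simp, ?_⟩
      intro f n
      simp
  | succ t ih =>
    intro h hle
    by_cases h1 : h ≤ 2 ^ t
    · obtain ⟨D, g, hD, hg, hlen, hsum⟩ := ih h h1
      refine ⟨D.image (· + 1), fun d => g (d - 1), ?_, ?_, ?_, ?_⟩
      · intro d hd
        simp only [mem_image] at hd
        obtain ⟨d', hd', rfl⟩ := hd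
        have := hD hd'
        simp only [mem_range] at this ⊢
        omega
      · intro d hd
        simp only [mem_image] at hd
        obtain ⟨d', hd', rfl⟩ := hd
        simpa using (hg d' hd').trans_le (by simp [pow_le_pow_right₀])
      · intro d hd
        simp only [mem_image] at hd
        obtain ⟨d', hd', rfl⟩ := hd
        have hd't : d' ≤ t := by have := hD hd'; simp only [mem_range] at this; omega
        have : t + 1 - (d' + 1) = t - d' := by omega
        rw [this]
        exact hlen d' hd'
      · intro f n
        rw [hsum f n, Finset.sum_image (by intro a _ b _ hab; simpa using hab)]
        apply Finset.sum_congr rfl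
        intro d hd
        have hd't : d ≤ t := by have := hD hd; simp only [mem_range] at this; omega
        have : t + 1 - (d + 1) = t - d := by omega
        rw [this]
        simp
    · push_neg at h1
      by_cases h2 : h = 2 ^ (t + 1)
      · subst h2
        refine ⟨{0}, fun _ => 0, by simp, by simp, by simp, ?_⟩
        intro f n
        simp
      · have h'le : h - 2 ^ t ≤ 2 ^ t := by
          have : 2 ^ (t + 1) = 2 ^ t + 2 ^ t := by ring
          omega
        obtain ⟨D, g, hD, hg, hlen, hsum⟩ := ih (h - 2 ^ t) h'le
        have h0D : 0 ∉ D := by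
          intro h0
          have := hlen 0 h0
          simp only [Nat.sub_zero] at this
          have hlt : h < 2 ^ (t + 1) := lt_of_le_of_ne hle h2
          have : 2 ^ (t + 1) = 2 ^ t + 2 ^ t := by ring
          omega
        refine ⟨insert 1 (D.image (· + 1)), fun d => if d = 1 then 0 else 2 ^ (d - 1) + g (d - 1),
          ?_, ?_, ?_, ?_⟩
        · intro d hd
          simp only [mem_insert, mem_image] at hd
          rcases hd with rfl | ⟨d', hd', rfl⟩
          · simp
          · have := hD hd'
            simp only [mem_range] at this ⊢
            omega
        · intro d hd
          simp only [mem_insert, mem_image] at hd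
          rcases hd with rfl | ⟨d', hd', rfl⟩
          · simp
          · have hd0 : d' ≠ 0 := fun he => h0D (he ▸ hd')
            have hne : d' + 1 ≠ 1 := by omega
            simp only [hne, if_false, Nat.add_sub_cancel]
            have hgd := hg d' hd'
            have h2 : 2 ^ (d' + 1) = 2 ^ d' + 2 ^ d' := by ring
            omega
        · intro d hd
          simp only [mem_insert, mem_image] at hd
          rcases hd with rfl | ⟨d', hd', rfl⟩
          · simpa using h1.le
          · have hd't : d' ≤ t := by have := hD hd'; simp only [mem_range] at this; omega
            have e : t + 1 - (d' + 1) = t - d' := by omega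
            rw [e]
            exact (hlen d' hd').trans (Nat.sub_le h _)
        · intro f n
          have h2t : 1 ∉ D.image (· + 1) := by
            simp only [mem_image]
            rintro ⟨d', hd', hd1⟩
            have : d' = 0 := by omega
            exact h0D (this ▸ hd')
          rw [Finset.sum_insert h2t]
          have split : ∑ m ∈ Finset.Ioc n (n + (h : ℤ)), f m
              = (∑ m ∈ Finset.Ioc n (n + (2 ^ t : ℕ)), f m)
                + ∑ m ∈ Finset.Ioc (n + (2 ^ t : ℕ)) (n + (h : ℤ)), f m := by
            have hcast : ((2 ^ t : ℕ) : ℤ) ≤ (h : ℤ) := by exact_mod_cast h1.le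
            rw [← Finset.sum_union]
            · rw [Finset.Ioc_union_Ioc_eq_Ioc]
              · have : (0:ℤ) ≤ ((2 ^ t : ℕ) : ℤ) := by positivity
                linarith
              · linarith
            · simp only [Finset.disjoint_left, Finset.mem_Ioc]
              intro a ha hb
              omega
          rw [split]
          congr 1
          · simp
          · have e2 : n + (h : ℤ) = (n + (2 ^ t : ℕ)) + ((h - 2 ^ t : ℕ) : ℤ) := by
              push_cast [Nat.cast_sub h1.le]; ring
            rw [e2, hsum f (n + (2 ^ t : ℕ)), Finset.sum_image (by intro a _ b _ hab; simpa using hab)]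
            apply Finset.sum_congr rfl
            intro d hd
            have hd't : d ≤ t := by have := hD hd; simp only [mem_range] at this; omega
            have hd0 : d ≠ 0 := fun he => h0D (he ▸ hd)
            have hne : d + 1 ≠ 1 := by omega
            have e : t + 1 - (d + 1) = t - d := by omega
            rw [e]
            simp only [hne, if_false, Nat.add_sub_cancel]
            have e3 : ((2 ^ d + g d) * 2 ^ (t - d) : ℕ) = (2 ^ t + g d * 2 ^ (t - d) : ℕ) := by
              rw [add_mul, ← pow_add]
              congr 2
              omega
            rw [e3]
            push_cast
            ring_nf


/-- Rademacher–Menchov + Hölder: for any `f : ℤ → ℂ`,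
`t ≥ 0`, `H = 2^t`, any integer `n`, positive integer `h ≤ H` and real `r ≥ 1`,
`|S(n;h)|^{2r} ≤ (t+1)^{2r-1} · ∑_{0 ≤ d ≤ t} ∑_{0 ≤ v < 2^d}
  |S(n + v·2^{t-d}; 2^{t-d})|^{2r}`. -/
theorem stmt5 (f : ℤ → ℂ) (t : ℕ) (n : ℤ) (h : ℕ) (hh : 0 < h) (hht : h ≤ 2 ^ t)
    (r : ℝ) (hr : 1 ≤ r) :
    ‖∑ m ∈ Finset.Ioc n (n + (h : ℤ)), f m‖ ^ (2 * r) ≤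
      ((t : ℝ) + 1) ^ (2 * r - 1) *
        ∑ d ∈ Finset.range (t + 1), ∑ v ∈ Finset.range (2 ^ d),
          ‖∑ m ∈ Finset.Ioc (n + (v * 2 ^ (t - d) : ℕ))
              (n + (v * 2 ^ (t - d) : ℕ) + (2 ^ (t - d) : ℕ)), f m‖ ^ (2 * r) := by
  obtain ⟨D, g, hD, hg, -, hsum⟩ := dyadic_decomp t h hht
  set A : ℕ → ℕ → ℝ := fun d v =>
    ‖∑ m ∈ Finset.Ioc (n + (v * 2 ^ (t - d) : ℕ))
        (n + (v * 2 ^ (t - d) : ℕ) + (2 ^ (t - d) : ℕ)), f m‖ ^ (2 * r) with hA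
  have hp1 : (1:ℝ) ≤ 2 * r := by linarith
  have hAnn : ∀ d v, 0 ≤ A d v := fun d v => Real.rpow_nonneg (norm_nonneg _) _
  have step1 : ‖∑ m ∈ Finset.Ioc n (n + (h : ℤ)), f m‖ ^ (2 * r) ≤
      (∑ d ∈ D, ‖∑ m ∈ Finset.Ioc (n + (g d * 2 ^ (t - d) : ℕ))
        (n + (g d * 2 ^ (t - d) : ℕ) + (2 ^ (t - d) : ℕ)), f m‖) ^ (2 * r) := by
    rw [hsum f n]
    exact Real.rpow_le_rpow (norm_nonneg _) (norm_sum_le _ _) (by linarith)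
  have step2 := rpow_sum_le_card_mul D
    (fun d => ‖∑ m ∈ Finset.Ioc (n + (g d * 2 ^ (t - d) : ℕ))
        (n + (g d * 2 ^ (t - d) : ℕ) + (2 ^ (t - d) : ℕ)), f m‖)
    (fun d _ => norm_nonneg _) hp1
  have hcard : (D.card : ℝ) ^ (2 * r - 1) ≤ ((t : ℝ) + 1) ^ (2 * r - 1) := by
    apply Real.rpow_le_rpow (by positivity) _ (by linarith)
    have := Finset.card_le_card hD
    simp only [Finset.card_range] at this
    exact_mod_cast this
  have step3 : ∑ d ∈ D, A d (g d) ≤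
      ∑ d ∈ Finset.range (t + 1), ∑ v ∈ Finset.range (2 ^ d), A d v := by
    calc ∑ d ∈ D, A d (g d)
        ≤ ∑ d ∈ D, ∑ v ∈ Finset.range (2 ^ d), A d v := by
          apply Finset.sum_le_sum
          intro d hd
          exact Finset.single_le_sum (fun v _ => hAnn d v)
            (Finset.mem_range.mpr (hg d hd))
      _ ≤ ∑ d ∈ Finset.range (t + 1), ∑ v ∈ Finset.range (2 ^ d), A d v :=
          Finset.sum_le_sum_of_subset_of_nonneg hD
            (fun d _ _ => Finset.sum_nonneg (fun v _ => hAnn d v))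
  calc ‖∑ m ∈ Finset.Ioc n (n + (h : ℤ)), f m‖ ^ (2 * r)
      ≤ (∑ d ∈ D, ‖∑ m ∈ Finset.Ioc (n + (g d * 2 ^ (t - d) : ℕ))
          (n + (g d * 2 ^ (t - d) : ℕ) + (2 ^ (t - d) : ℕ)), f m‖) ^ (2 * r) := step1
    _ ≤ (D.card : ℝ) ^ (2 * r - 1) * ∑ d ∈ D, A d (g d) := step2
    _ ≤ ((t : ℝ) + 1) ^ (2 * r - 1) * ∑ d ∈ D, A d (g d) := by
        apply mul_le_mul_of_nonneg_right hcard (Finset.sum_nonneg (fun d _ => hAnn d (g d)))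
    _ ≤ ((t : ℝ) + 1) ^ (2 * r - 1) *
        ∑ d ∈ Finset.range (t + 1), ∑ v ∈ Finset.range (2 ^ d), A d v := by
        apply mul_le_mul_of_nonneg_left step3 (by positivity)
end

section
/- Let q be a positive integer, f : ℤ → ℂ a q-periodic function, H a positive integer, and H₀ a positive integer with H₀ ≤ H. Define S(N;h) = ∑_{N < n ≤ N+h} f(n) and M(n;K) = max_{1 ≤ h ≤ K} |S(n;h)|. Then for every positive integer r, ∑_{n=1}^{q} M(n;H)^{2r} ≤ (⌈H/H₀⌉+1)^{2r} · ∑_{n=1}^{q} M(n;H₀)^{2r}. -/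
open scoped NNReal

open Finset in
/-- Shift invariance of a sum of a `q`-periodic function over `q` consecutive integers. -/
private lemma shift_sum (q : ℕ) (g : ℤ → ℝ) (hg : ∀ n : ℤ, g (n + q) = g n) (c : ℕ) :
    ∑ i ∈ range q, g (1 + i + c) = ∑ i ∈ range q, g (1 + i) := by
  induction c with
  | zero => simp
  | succ c ih =>
    have step : ∑ i ∈ range q, g (1 + i + c + 1) = ∑ i ∈ range q, g (1 + i + c) := by
      have h1 : ∑ i ∈ range (q + 1), g (1 + i + c) =
          (∑ i ∈ range q, g (1 + (i + 1 : ℕ) + c)) + g (1 + (0 : ℕ) + c) :=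
        Finset.sum_range_succ' (fun i => g (1 + i + c)) q
      rw [Finset.sum_range_succ] at h1
      have h2 : g (1 + (q : ℤ) + c) = g (1 + (0:ℤ) + c) := by
        have := hg (1 + c)
        calc g (1 + (q : ℤ) + c) = g (1 + c + q) := by ring_nf
          _ = g (1 + c) := this
          _ = g (1 + (0:ℤ) + c) := by ring_nf
      have h3 : ∀ i : ℕ, g (1 + ((i + 1 : ℕ) : ℤ) + c) = g (1 + (i:ℤ) + c + 1) := by
        intro i; push_cast; ring_nf
      rw [h2] at h1
      simp only [h3] at h1
      push_cast at h1 ⊢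
      linarith [h1]
    calc ∑ i ∈ range q, g (1 + i + ((c + 1 : ℕ) : ℤ))
        = ∑ i ∈ range q, g (1 + i + c + 1) := by
          refine Finset.sum_congr rfl fun i _ => ?_
          have : (1 + (i:ℤ) + ((c + 1 : ℕ) : ℤ)) = 1 + i + c + 1 := by push_cast; ring
          rw [this]
      _ = ∑ i ∈ range q, g (1 + i + c) := step
      _ = ∑ i ∈ range q, g (1 + i) := ih

open Finset in
/-- Pointwise decomposition bound: the maximal partial sum up to `H` is bounded by the
sum of `⌈H/H₀⌉+1` maximal partial sums up to `H₀` at shifted starting points. -/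
private lemma key_bound (f : ℤ → ℂ) (H H₀ : ℕ) (hH₀ : 0 < H₀) (hH₀H : H₀ ≤ H) (n : ℤ) :
    (Icc 1 H).sup (fun h => ‖∑ m ∈ Finset.Ioc n (n + h), f m‖₊) ≤
      ∑ j ∈ range (⌈(H : ℝ) / H₀⌉₊ + 1),
        (Icc 1 H₀).sup
          (fun h => ‖∑ m ∈ Finset.Ioc (n + j * H₀) (n + j * H₀ + h), f m‖₊) := by
  set K : ℕ := ⌈(H : ℝ) / H₀⌉₊ + 1 with hKdef
  have hHK : H ≤ K * H₀ := by
    have h1 : (H : ℝ) ≤ ⌈(H : ℝ) / H₀⌉₊ * H₀ := by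
      have h2 := Nat.le_ceil ((H : ℝ) / H₀)
      rw [div_le_iff₀ (by positivity : (0:ℝ) < (H₀:ℝ))] at h2
      exact h2
    have : (H : ℝ) ≤ (K : ℝ) * H₀ := by
      push_cast [hKdef]
      nlinarith [hH₀.le, (by positivity : (0:ℝ) ≤ (H₀:ℝ))]
    exact_mod_cast this
  refine Finset.sup_le fun h hh => ?_
  rw [Finset.mem_Icc] at hh
  obtain ⟨hh1, hh2⟩ := hh
  have hhK : h ≤ K * H₀ := hh2.trans hHK
  set T : ℕ → ℂ := fun j => ∑ m ∈ Finset.Ioc n (n + (min h (j * H₀) : ℕ)), f m with hT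
  have hT0 : T 0 = 0 := by simp [hT]
  have hTK : T K = ∑ m ∈ Finset.Ioc n (n + h), f m := by
    simp only [hT, min_eq_left hhK]
  have tele : ∑ j ∈ range K, (T (j + 1) - T j) = T K - T 0 := Finset.sum_range_sub T K
  have main : ∑ m ∈ Finset.Ioc n (n + h), f m = ∑ j ∈ range K, (T (j + 1) - T j) := by
    rw [tele, hT0, hTK, sub_zero]
  calc ‖∑ m ∈ Finset.Ioc n (n + h), f m‖₊
      = ‖∑ j ∈ range K, (T (j + 1) - T j)‖₊ := by rw [main]
    _ ≤ ∑ j ∈ range K, ‖T (j + 1) - T j‖₊ := nnnorm_sum_le _ _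
    _ ≤ ∑ j ∈ range K,
          (Icc 1 H₀).sup
            (fun h => ‖∑ m ∈ Finset.Ioc (n + j * H₀) (n + j * H₀ + h), f m‖₊) := by
        refine Finset.sum_le_sum fun j _ => ?_
        have hmono : min h (j * H₀) ≤ min h ((j + 1) * H₀) := by
          exact min_le_min le_rfl (by nlinarith)
        have hle1 : n ≤ n + (min h (j * H₀) : ℕ) := by
          have : (0:ℤ) ≤ (min h (j * H₀) : ℕ) := Int.ofNat_nonneg _
          omega
        have hle2 : n + (min h (j * H₀) : ℕ) ≤ n + (min h ((j + 1) * H₀) : ℕ) := by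
          have : ((min h (j * H₀) : ℕ) : ℤ) ≤ ((min h ((j + 1) * H₀) : ℕ) : ℤ) := by
            exact_mod_cast hmono
          omega
        have hdiff : T (j + 1) - T j =
            ∑ m ∈ Finset.Ioc (n + (min h (j * H₀) : ℕ))
              (n + (min h ((j + 1) * H₀) : ℕ)), f m := by
          have hdisj : Disjoint (Finset.Ioc n (n + (min h (j * H₀) : ℕ)))
              (Finset.Ioc (n + (min h (j * H₀) : ℕ)) (n + (min h ((j + 1) * H₀) : ℕ))) := by
            rw [Finset.disjoint_left]
            intro a ha hb
            rw [Finset.mem_Ioc] at ha hb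
            omega
          have hcons : (∑ m ∈ Finset.Ioc n (n + (min h (j * H₀) : ℕ)), f m) +
              ∑ m ∈ Finset.Ioc (n + (min h (j * H₀) : ℕ))
                (n + (min h ((j + 1) * H₀) : ℕ)), f m =
              ∑ m ∈ Finset.Ioc n (n + (min h ((j + 1) * H₀) : ℕ)), f m := by
            rw [← Finset.sum_union hdisj, Finset.Ioc_union_Ioc_eq_Ioc hle1 hle2]
          simp only [hT]
          rw [← hcons]
          ring
        rw [hdiff]
        rcases le_or_gt h (j * H₀) with hcase | hcase
        · have he1 : min h (j * H₀) = h := min_eq_left hcase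
          have he2 : min h ((j + 1) * H₀) = h :=
            min_eq_left (hcase.trans (by nlinarith))
          rw [he1, he2]
          simp
        · have he1 : min h (j * H₀) = j * H₀ := min_eq_right hcase.le
          set t : ℕ := min h ((j + 1) * H₀) - j * H₀ with htdef
          have ht1 : 1 ≤ t := by
            have : j * H₀ + 1 ≤ min h ((j + 1) * H₀) := by
              refine le_min hcase ?_
              nlinarith
            omega
          have ht2 : t ≤ H₀ := by
            have : min h ((j + 1) * H₀) ≤ (j + 1) * H₀ := min_le_right _ _
            have h2 : (j + 1) * H₀ = j * H₀ + H₀ := by ring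
            omega
          have heq : n + (min h ((j + 1) * H₀) : ℕ) = n + (j * H₀ : ℕ) + (t : ℕ) := by
            have : min h ((j + 1) * H₀) = j * H₀ + t := by
              have : j * H₀ ≤ min h ((j + 1) * H₀) := le_min hcase.le (by nlinarith)
              omega
            rw [this]; push_cast; ring
          rw [he1, heq]
          have hmem : t ∈ Finset.Icc 1 H₀ := Finset.mem_Icc.mpr ⟨ht1, ht2⟩
          have := Finset.le_sup (f := fun h : ℕ =>
            ‖∑ m ∈ Finset.Ioc (n + (j * H₀ : ℕ)) (n + (j * H₀ : ℕ) + h), f m‖₊) hmem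
          convert this using 3 <;> push_cast <;> ring
    _ = ∑ j ∈ range K,
          (Icc 1 H₀).sup
            (fun h => ‖∑ m ∈ Finset.Ioc (n + j * H₀) (n + j * H₀ + h), f m‖₊) := rfl

open Finset in
private lemma sum_Icc_one_eq_range (q : ℕ) (F : ℕ → ℝ) :
    ∑ n ∈ Finset.Icc 1 q, F n = ∑ i ∈ range q, F (1 + i) := by
  induction q with
  | zero => simp
  | succ q ih =>
    rw [Finset.sum_Icc_succ_top (by omega), sum_range_succ, ih, add_comm q 1]

/-- for `f : ℤ → ℂ` `q`-periodic, `0 < H₀ ≤ H`, and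
`M(n;K) = max_{1 ≤ h ≤ K} |S(n;h)|`, one has for every positive integer `r`:
`∑_{n=1}^q M(n;H)^{2r} ≤ (⌈H/H₀⌉+1)^{2r} · ∑_{n=1}^q M(n;H₀)^{2r}`. -/
theorem stmt6 (q : ℕ) (hq : 0 < q) (f : ℤ → ℂ)
    (hper : ∀ n : ℤ, f (n + q) = f n)
    (H H₀ : ℕ) (hH₀ : 0 < H₀) (hH₀H : H₀ ≤ H) (r : ℕ) (hr : 0 < r) :
    ∑ n ∈ Finset.Icc 1 q,
        ((((Finset.Icc 1 H).sup
          (fun h => ‖∑ m ∈ Finset.Ioc (n : ℤ) ((n : ℤ) + h), f m‖₊) : ℝ≥0) : ℝ)) ^ (2 * r) ≤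
      ((⌈(H : ℝ) / H₀⌉₊ + 1 : ℝ)) ^ (2 * r) *
        ∑ n ∈ Finset.Icc 1 q,
          ((((Finset.Icc 1 H₀).sup
            (fun h => ‖∑ m ∈ Finset.Ioc (n : ℤ) ((n : ℤ) + h), f m‖₊) : ℝ≥0) : ℝ)) ^ (2 * r) := by
  classical
  set K : ℕ := ⌈(H : ℝ) / H₀⌉₊ + 1 with hKdef
  set M₀ : ℤ → ℝ≥0 := fun x =>
    (Finset.Icc 1 H₀).sup (fun h => ‖∑ m ∈ Finset.Ioc x (x + h), f m‖₊) with hM₀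
  set g : ℤ → ℝ := fun x => ((M₀ x : ℝ)) ^ (2 * r) with hg
  -- periodicity of inner sums, hence of `g`
  have hSper : ∀ (x : ℤ) (h : ℕ),
      ∑ m ∈ Finset.Ioc (x + q) (x + q + h), f m = ∑ m ∈ Finset.Ioc x (x + h), f m := by
    intro x h
    have hmap : (Finset.Ioc x (x + h)).map (addRightEmbedding (q : ℤ)) =
        Finset.Ioc (x + q) (x + q + h) := by
      rw [Finset.map_add_right_Ioc]
      congr 1
      ring
    rw [← hmap, Finset.sum_map]
    exact Finset.sum_congr rfl fun m _ => hper m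
  have hgper : ∀ x : ℤ, g (x + q) = g x := by
    intro x
    have : M₀ (x + q) = M₀ x := by
      simp only [hM₀]
      exact Finset.sup_congr rfl fun h _ => by rw [hSper]
    simp [hg, this]
  -- pointwise bound
  have hKpos : 0 < K := by omega
  have pointwise : ∀ n : ℤ,
      (((Finset.Icc 1 H).sup
        (fun h => ‖∑ m ∈ Finset.Ioc n (n + h), f m‖₊) : ℝ≥0) : ℝ) ^ (2 * r) ≤
      (K : ℝ) ^ (2 * r - 1) * ∑ j ∈ Finset.range K, g (n + j * H₀) := by
    intro n
    have h1 := key_bound f H H₀ hH₀ hH₀H n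
    have h2 : (((Finset.Icc 1 H).sup
        (fun h => ‖∑ m ∈ Finset.Ioc n (n + h), f m‖₊) : ℝ≥0) : ℝ) ≤
        ∑ j ∈ Finset.range K, ((M₀ (n + j * H₀) : ℝ)) := by
      calc (((Finset.Icc 1 H).sup (fun h => ‖∑ m ∈ Finset.Ioc n (n + h), f m‖₊) : ℝ≥0) : ℝ)
          ≤ ((∑ j ∈ Finset.range K, (Finset.Icc 1 H₀).sup
              (fun h => ‖∑ m ∈ Finset.Ioc (n + j * H₀) (n + j * H₀ + h), f m‖₊) : ℝ≥0) : ℝ) := by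
            exact_mod_cast h1
        _ = ∑ j ∈ Finset.range K, ((M₀ (n + j * H₀) : ℝ)) := by
            push_cast
            rfl
    have h3 : (((Finset.Icc 1 H).sup
        (fun h => ‖∑ m ∈ Finset.Ioc n (n + h), f m‖₊) : ℝ≥0) : ℝ) ^ (2 * r) ≤
        (∑ j ∈ Finset.range K, ((M₀ (n + j * H₀) : ℝ))) ^ (2 * r) :=
      pow_le_pow_left₀ (NNReal.coe_nonneg _) h2 _
    have h4 := pow_sum_div_card_le_sum_pow
      (s := Finset.range K) (f := fun j => ((M₀ (n + j * H₀) : ℝ)))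
      (fun i _ => NNReal.coe_nonneg _) (2 * r - 1)
    rw [Finset.card_range] at h4
    have hexp : 2 * r - 1 + 1 = 2 * r := by omega
    rw [hexp] at h4
    rw [div_le_iff₀ (by positivity : (0:ℝ) < (K : ℝ) ^ (2 * r - 1))] at h4
    calc (((Finset.Icc 1 H).sup
        (fun h => ‖∑ m ∈ Finset.Ioc n (n + h), f m‖₊) : ℝ≥0) : ℝ) ^ (2 * r)
        ≤ (∑ j ∈ Finset.range K, ((M₀ (n + j * H₀) : ℝ))) ^ (2 * r) := h3
      _ ≤ (∑ j ∈ Finset.range K, ((M₀ (n + j * H₀) : ℝ)) ^ (2 * r)) * (K : ℝ) ^ (2 * r - 1) := h4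
      _ = (K : ℝ) ^ (2 * r - 1) * ∑ j ∈ Finset.range K, g (n + j * H₀) := by
          rw [mul_comm]
  -- sum the pointwise bound over `n`
  have step1 : ∑ n ∈ Finset.Icc 1 q,
      (((Finset.Icc 1 H).sup
        (fun h => ‖∑ m ∈ Finset.Ioc (n : ℤ) ((n : ℤ) + h), f m‖₊) : ℝ≥0) : ℝ) ^ (2 * r) ≤
      (K : ℝ) ^ (2 * r - 1) *
        ∑ n ∈ Finset.Icc 1 q, ∑ j ∈ Finset.range K, g ((n : ℤ) + j * H₀) := by
    rw [Finset.mul_sum]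
    exact Finset.sum_le_sum fun n _ => pointwise (n : ℤ)
  -- compute the double sum using periodicity
  have step2 : ∑ n ∈ Finset.Icc 1 q, ∑ j ∈ Finset.range K, g ((n : ℤ) + j * H₀) =
      (K : ℝ) * ∑ n ∈ Finset.Icc 1 q, g (n : ℤ) := by
    rw [Finset.sum_comm]
    have inner : ∀ j : ℕ,
        ∑ n ∈ Finset.Icc 1 q, g ((n : ℤ) + j * H₀) = ∑ n ∈ Finset.Icc 1 q, g (n : ℤ) := by
      intro j
      rw [sum_Icc_one_eq_range q (fun n => g ((n : ℤ) + j * H₀)),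
        sum_Icc_one_eq_range q (fun n => g (n : ℤ))]
      have := shift_sum q g hgper (j * H₀)
      calc ∑ i ∈ Finset.range q, g ((((1 + i : ℕ)) : ℤ) + j * H₀)
          = ∑ i ∈ Finset.range q, g (1 + (i : ℤ) + ((j * H₀ : ℕ) : ℤ)) := by
            refine Finset.sum_congr rfl fun i _ => ?_
            first
              | (congr 1; push_cast; ring)
              | congr 1
        _ = ∑ i ∈ Finset.range q, g (1 + (i : ℤ)) := this
        _ = ∑ i ∈ Finset.range q, g (((1 + i : ℕ) : ℤ)) := by
            refine Finset.sum_congr rfl fun i _ => ?_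
            first
              | (congr 1; push_cast; ring)
              | congr 1
    rw [Finset.sum_congr rfl fun j _ => inner j, Finset.sum_const, Finset.card_range,
      nsmul_eq_mul]
  have final : (K : ℝ) ^ (2 * r - 1) * ((K : ℝ) * ∑ n ∈ Finset.Icc 1 q, g (n : ℤ)) =
      ((⌈(H : ℝ) / H₀⌉₊ + 1 : ℝ)) ^ (2 * r) * ∑ n ∈ Finset.Icc 1 q, g (n : ℤ) := by
    have hc : ((⌈(H : ℝ) / H₀⌉₊ + 1 : ℝ)) = (K : ℝ) := by push_cast [hKdef]; ring
    rw [hc, ← mul_assoc, ← pow_succ]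
    congr 2
    omega
  calc ∑ n ∈ Finset.Icc 1 q,
      (((Finset.Icc 1 H).sup
        (fun h => ‖∑ m ∈ Finset.Ioc (n : ℤ) ((n : ℤ) + h), f m‖₊) : ℝ≥0) : ℝ) ^ (2 * r)
      ≤ (K : ℝ) ^ (2 * r - 1) *
        ∑ n ∈ Finset.Icc 1 q, ∑ j ∈ Finset.range K, g ((n : ℤ) + j * H₀) := step1
    _ = (K : ℝ) ^ (2 * r - 1) * ((K : ℝ) * ∑ n ∈ Finset.Icc 1 q, g (n : ℤ)) := by rw [step2]
    _ = ((⌈(H : ℝ) / H₀⌉₊ + 1 : ℝ)) ^ (2 * r) * ∑ n ∈ Finset.Icc 1 q, g (n : ℤ) := final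
end
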